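/- For every nonzero integer k, the set of 4×4 rational matrices with rows (1, a, a²/2, d/(2k)), (0, 1, a, c/k), (0, 0, 1, b), (0, 0, 0, 1) for a, b, c, d ∈ ℤ is a subgroup of GL₄(ℚ); the map restricting such a matrix to its lower-right 3×3 block is a surjective group homomorphism from this subgroup onto the matrix realization of Heis^ℤ(k) (the 3×3 unipotent upper-triangular matrices with rows (1, a, c/k), (0, 1, b), (0, 0, 1), a,b,c ∈ ℤ), and its kernel, consisting of the matrices with a = b = c = 0, is isomorphic to ℤ and is central in the subgroup. -/

import Mathlib

open Matrix

noncomputable section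
namespace HeisAux

set_option linter.unusedTactic false

def mk4 (k a b c d : ℤ) : Matrix (Fin 4) (Fin 4) ℚ :=
  !![1, (a : ℚ), (a : ℚ) ^ 2 / 2, (d : ℚ) / (2 * (k : ℚ));
     0, 1, (a : ℚ), (c : ℚ) / (k : ℚ);
     0, 0, 1, (b : ℚ);
     0, 0, 0, 1]

def mk3 (k a b c : ℤ) : Matrix (Fin 3) (Fin 3) ℚ :=
  !![1, (a : ℚ), (c : ℚ) / (k : ℚ); 0, 1, (b : ℚ); 0, 0, 1]

theorem mk4_mul (k : ℤ) (hk : k ≠ 0) (a b c d a' b' c' d' : ℤ) :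
    mk4 k a b c d * mk4 k a' b' c' d' =
      mk4 k (a + a') (b + b') (c + c' + k * a * b')
        (d + d' + 2 * a * c' + k * a ^ 2 * b') := by
  have hk' : (k : ℚ) ≠ 0 := Int.cast_ne_zero.mpr hk
  ext i j
  fin_cases i <;> fin_cases j <;>
    simp [mk4, Matrix.mul_apply, Fin.sum_univ_four, Matrix.vecHead, Matrix.vecTail] <;>
    push_cast <;> (try field_simp) <;> (try ring)

theorem mk4_one (k : ℤ) : mk4 k 0 0 0 0 = 1 := by
  ext i j
  fin_cases i <;> fin_cases j <;>
    simp [mk4, Matrix.one_apply, Matrix.vecHead, Matrix.vecTail]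

theorem mk3_mul (k : ℤ) (hk : k ≠ 0) (a b c a' b' c' : ℤ) :
    mk3 k a b c * mk3 k a' b' c' = mk3 k (a + a') (b + b') (c + c' + k * a * b') := by
  have hk' : (k : ℚ) ≠ 0 := Int.cast_ne_zero.mpr hk
  ext i j
  fin_cases i <;> fin_cases j <;>
    simp [mk3, Matrix.mul_apply, Fin.sum_univ_three, Matrix.vecHead, Matrix.vecTail] <;>
    push_cast <;> (try field_simp) <;> (try ring)

theorem mk3_one (k : ℤ) : mk3 k 0 0 0 = 1 := by
  ext i j
  fin_cases i <;> fin_cases j <;>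
    simp [mk3, Matrix.one_apply, Matrix.vecHead, Matrix.vecTail]

theorem mk4_inj (k : ℤ) (hk : k ≠ 0) {a b c d a' b' c' d' : ℤ}
    (h : mk4 k a b c d = mk4 k a' b' c' d') : a = a' ∧ b = b' ∧ c = c' ∧ d = d' := by
  have hk' : (k : ℚ) ≠ 0 := Int.cast_ne_zero.mpr hk
  have h01 := congrFun (congrFun h 0) 1
  have h23 := congrFun (congrFun h 2) 3
  have h13 := congrFun (congrFun h 1) 3
  have h03 := congrFun (congrFun h 0) 3
  simp [mk4] at h01 h23 h13 h03
  field_simp at h13 h03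
  exact ⟨h01, h23, by exact_mod_cast h13, by exact_mod_cast h03⟩

theorem mk3_inj (k : ℤ) (hk : k ≠ 0) {a b c a' b' c' : ℤ}
    (h : mk3 k a b c = mk3 k a' b' c') : a = a' ∧ b = b' ∧ c = c' := by
  have hk' : (k : ℚ) ≠ 0 := Int.cast_ne_zero.mpr hk
  have h01 := congrFun (congrFun h 0) 1
  have h12 := congrFun (congrFun h 1) 2
  have h02 := congrFun (congrFun h 0) 2
  simp [mk3] at h01 h12 h02
  field_simp at h02
  exact ⟨h01, h12, by exact_mod_cast h02⟩

def mk4u (k : ℤ) (hk : k ≠ 0) (a b c d : ℤ) : GL (Fin 4) ℚ where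
  val := mk4 k a b c d
  inv := mk4 k (-a) (-b) (k * a * b - c) (2 * a * c - k * a ^ 2 * b - d)
  val_inv := by rw [mk4_mul k hk]; rw [← mk4_one k]; ring_nf
  inv_val := by rw [mk4_mul k hk]; rw [← mk4_one k]; ring_nf

def mk3u (k : ℤ) (hk : k ≠ 0) (a b c : ℤ) : GL (Fin 3) ℚ where
  val := mk3 k a b c
  inv := mk3 k (-a) (-b) (k * a * b - c)
  val_inv := by rw [mk3_mul k hk]; rw [← mk3_one k]; ring_nf
  inv_val := by rw [mk3_mul k hk]; rw [← mk3_one k]; ring_nf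

variable (k : ℤ) (hk : k ≠ 0)

def Sgrp : Subgroup (GL (Fin 4) ℚ) where
  carrier := {M | ∃ a b c d : ℤ, (M : Matrix (Fin 4) (Fin 4) ℚ) = mk4 k a b c d}
  one_mem' := ⟨0, 0, 0, 0, by rw [mk4_one]; rfl⟩
  mul_mem' := by
    rintro M N ⟨a, b, c, d, hM⟩ ⟨a', b', c', d', hN⟩
    exact ⟨_, _, _, _, by rw [Units.val_mul, hM, hN, mk4_mul k hk]⟩
  inv_mem' := by
    rintro M ⟨a, b, c, d, hM⟩
    have hMu : M = mk4u k hk a b c d := Units.ext hM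
    exact ⟨-a, -b, k * a * b - c, 2 * a * c - k * a ^ 2 * b - d, by rw [hMu]; rfl⟩

def Tgrp : Subgroup (GL (Fin 3) ℚ) where
  carrier := {N | ∃ a b c : ℤ, (N : Matrix (Fin 3) (Fin 3) ℚ) = mk3 k a b c}
  one_mem' := ⟨0, 0, 0, by rw [mk3_one]; rfl⟩
  mul_mem' := by
    rintro M N ⟨a, b, c, hM⟩ ⟨a', b', c', hN⟩
    exact ⟨_, _, _, by rw [Units.val_mul, hM, hN, mk3_mul k hk]⟩
  inv_mem' := by
    rintro M ⟨a, b, c, hM⟩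
    have hMu : M = mk3u k hk a b c := Units.ext hM
    exact ⟨-a, -b, k * a * b - c, by rw [hMu]; rfl⟩

theorem mem_S {M : GL (Fin 4) ℚ} :
    M ∈ Sgrp k hk ↔ ∃ a b c d : ℤ, (M : Matrix (Fin 4) (Fin 4) ℚ) = mk4 k a b c d :=
  Iff.rfl

theorem mem_T {N : GL (Fin 3) ℚ} :
    N ∈ Tgrp k hk ↔ ∃ a b c : ℤ, (N : Matrix (Fin 3) (Fin 3) ℚ) = mk3 k a b c :=
  Iff.rfl

def pp (M : Sgrp k hk) : ℤ × ℤ × ℤ × ℤ :=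
  let h := (mem_S k hk).mp M.2
  (h.choose, h.choose_spec.choose, h.choose_spec.choose_spec.choose,
    h.choose_spec.choose_spec.choose_spec.choose)

theorem pp_spec (M : Sgrp k hk) :
    ((M : GL (Fin 4) ℚ) : Matrix (Fin 4) (Fin 4) ℚ) =
      mk4 k (pp k hk M).1 (pp k hk M).2.1 (pp k hk M).2.2.1 (pp k hk M).2.2.2 :=
  ((mem_S k hk).mp M.2).choose_spec.choose_spec.choose_spec.choose_spec

theorem pp_eq {M : Sgrp k hk} {a b c d : ℤ}
    (h : ((M : GL (Fin 4) ℚ) : Matrix (Fin 4) (Fin 4) ℚ) = mk4 k a b c d) :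
    pp k hk M = (a, b, c, d) := by
  have h2 := (pp_spec k hk M).symm.trans h
  obtain ⟨ha, hb, hc, hd⟩ := mk4_inj k hk h2
  simp [Prod.ext_iff, ha, hb, hc, hd]

def fhom : Sgrp k hk →* Tgrp k hk :=
  MonoidHom.mk'
    (fun M => ⟨mk3u k hk (pp k hk M).1 (pp k hk M).2.1 (pp k hk M).2.2.1,
      (mem_T k hk).mpr ⟨_, _, _, rfl⟩⟩)
    (by
      intro M N
      obtain ⟨a, b, c, d, hM⟩ := (mem_S k hk).mp M.2
      obtain ⟨a', b', c', d', hN⟩ := (mem_S k hk).mp N.2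
      have hMN : (((M * N : Sgrp k hk) : GL (Fin 4) ℚ) : Matrix (Fin 4) (Fin 4) ℚ) =
          mk4 k (a + a') (b + b') (c + c' + k * a * b')
            (d + d' + 2 * a * c' + k * a ^ 2 * b') := by
        rw [Subgroup.coe_mul, Units.val_mul, hM, hN, mk4_mul k hk]
      rw [pp_eq k hk hM, pp_eq k hk hN, pp_eq k hk hMN]
      refine Subtype.ext (Units.ext ?_)
      show mk3 k _ _ _ = (mk3u k hk a b c * mk3u k hk a' b' c' : GL (Fin 3) ℚ)
      rw [Units.val_mul]
      show _ = mk3 k a b c * mk3 k a' b' c'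
      rw [mk3_mul k hk])

theorem fhom_apply (M : Sgrp k hk) :
    ((fhom k hk M : GL (Fin 3) ℚ) : Matrix (Fin 3) (Fin 3) ℚ) =
      mk3 k (pp k hk M).1 (pp k hk M).2.1 (pp k hk M).2.2.1 := rfl

theorem mk3_entry (a b c d : ℤ) (i j : Fin 3) :
    mk3 k a b c i j = mk4 k a b c d i.succ j.succ := by
  fin_cases i <;> fin_cases j <;> simp [mk3, mk4, Fin.succ]

theorem mem_ker_iff (M : Sgrp k hk) :
    M ∈ (fhom k hk).ker ↔
      ∃ d : ℤ, ((M : GL (Fin 4) ℚ) : Matrix (Fin 4) (Fin 4) ℚ) = mk4 k 0 0 0 d := by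
  rw [MonoidHom.mem_ker]
  constructor
  · intro h
    have hval : mk3 k (pp k hk M).1 (pp k hk M).2.1 (pp k hk M).2.2.1 = mk3 k 0 0 0 := by
      rw [mk3_one]
      exact congrArg (fun x : Tgrp k hk => ((x : GL (Fin 3) ℚ) : Matrix (Fin 3) (Fin 3) ℚ)) h
    obtain ⟨h1, h2, h3⟩ := mk3_inj k hk hval
    exact ⟨(pp k hk M).2.2.2, by rw [pp_spec k hk M, h1, h2, h3]⟩
  · rintro ⟨d, hd⟩
    have hp := pp_eq k hk hd
    refine Subtype.ext (Units.ext ?_)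
    show mk3 k (pp k hk M).1 (pp k hk M).2.1 (pp k hk M).2.2.1 = (1 : Matrix (Fin 3) (Fin 3) ℚ)
    rw [hp, ← mk3_one k]

theorem fhom_surj : Function.Surjective (fhom k hk) := by
  intro N
  obtain ⟨a, b, c, h⟩ := (mem_T k hk).mp N.2
  refine ⟨⟨mk4u k hk a b c 0, (mem_S k hk).mpr ⟨a, b, c, 0, rfl⟩⟩, ?_⟩
  refine Subtype.ext (Units.ext ?_)
  have hp := pp_eq k hk (M := ⟨mk4u k hk a b c 0, (mem_S k hk).mpr ⟨a, b, c, 0, rfl⟩⟩)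
    (a := a) (b := b) (c := c) (d := 0) rfl
  show mk3 k _ _ _ = _
  rw [hp, h]

def gker : Multiplicative ℤ →* (fhom k hk).ker :=
  MonoidHom.mk'
    (fun d => ⟨⟨mk4u k hk 0 0 0 (Multiplicative.toAdd d), (mem_S k hk).mpr ⟨0, 0, 0, _, rfl⟩⟩,
      (mem_ker_iff k hk _).mpr ⟨_, rfl⟩⟩)
    (by
      intro x y
      refine Subtype.ext (Subtype.ext (Units.ext ?_))
      show mk4 k 0 0 0 (Multiplicative.toAdd (x * y)) =
        mk4 k 0 0 0 (Multiplicative.toAdd x) * mk4 k 0 0 0 (Multiplicative.toAdd y)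
      rw [mk4_mul k hk, toAdd_mul]
      ring_nf)

theorem gker_bij : Function.Bijective (gker k hk) := by
  constructor
  · intro x y h
    have hv : mk4 k 0 0 0 (Multiplicative.toAdd x) = mk4 k 0 0 0 (Multiplicative.toAdd y) :=
      congrArg (fun z : (fhom k hk).ker =>
        (((z : Sgrp k hk) : GL (Fin 4) ℚ) : Matrix (Fin 4) (Fin 4) ℚ)) h
    obtain ⟨-, -, -, hd⟩ := mk4_inj k hk hv
    exact Multiplicative.toAdd.injective hd
  · intro M
    obtain ⟨d, hd⟩ := (mem_ker_iff k hk M.1).mp M.2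
    refine ⟨Multiplicative.ofAdd d, ?_⟩
    refine Subtype.ext (Subtype.ext (Units.ext ?_))
    show mk4 k 0 0 0 (Multiplicative.toAdd (Multiplicative.ofAdd d)) = _
    rw [toAdd_ofAdd, hd]

theorem ker_central : (fhom k hk).ker ≤ Subgroup.center (Sgrp k hk) := by
  intro M hM
  rw [Subgroup.mem_center_iff]
  intro N
  obtain ⟨d, hd⟩ := (mem_ker_iff k hk M).mp hM
  obtain ⟨a, b, c, e, hN⟩ := (mem_S k hk).mp N.2
  refine Subtype.ext (Units.ext ?_)
  rw [Subgroup.coe_mul, Subgroup.coe_mul, Units.val_mul, Units.val_mul, hd, hN,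
    mk4_mul k hk, mk4_mul k hk]
  ring_nf

theorem mk4_zero_d (d : ℤ) :
    mk4 k 0 0 0 d =
      !![1, 0, 0, (d : ℚ) / (2 * (k : ℚ)); 0, 1, 0, 0; 0, 0, 1, 0; 0, 0, 0, 1] := by
  norm_num [mk4]

end HeisAux

open HeisAux

/-- For `k ≠ 0`, the 4×4 rational matrices with rows `(1, a, a²/2, d/(2k))`, `(0,1,a,c/k)`,
`(0,0,1,b)`, `(0,0,0,1)`, `a,b,c,d ∈ ℤ`, form a subgroup of `GL₄(ℚ)`; restriction to the
lower-right 3×3 block is a surjective group homomorphism onto the matrix realization of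
`Heis^ℤ(k)` (the 3×3 unipotent matrices with rows `(1,a,c/k)`, `(0,1,b)`, `(0,0,1)`,
`a,b,c ∈ ℤ`), and its kernel (the matrices with `a = b = c = 0`) is isomorphic to `ℤ` and
central. -/
theorem heis_extension_ac_matrix (k : ℤ) (hk : k ≠ 0) :
    ∃ S : Subgroup (GL (Fin 4) ℚ),
      (S : Set (GL (Fin 4) ℚ)) =
        {M : GL (Fin 4) ℚ | ∃ a b c d : ℤ, (M : Matrix (Fin 4) (Fin 4) ℚ) =
          !![1, (a : ℚ), (a : ℚ) ^ 2 / 2, (d : ℚ) / (2 * (k : ℚ));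
             0, 1, (a : ℚ), (c : ℚ) / (k : ℚ);
             0, 0, 1, (b : ℚ);
             0, 0, 0, 1]} ∧
      ∃ T : Subgroup (GL (Fin 3) ℚ),
        (T : Set (GL (Fin 3) ℚ)) =
          {N : GL (Fin 3) ℚ | ∃ a b c : ℤ, (N : Matrix (Fin 3) (Fin 3) ℚ) =
            !![1, (a : ℚ), (c : ℚ) / (k : ℚ); 0, 1, (b : ℚ); 0, 0, 1]} ∧
        ∃ f : S →* T,
          (∀ (M : S) (i j : Fin 3),
            ((f M : GL (Fin 3) ℚ) : Matrix (Fin 3) (Fin 3) ℚ) i j =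
              ((M : GL (Fin 4) ℚ) : Matrix (Fin 4) (Fin 4) ℚ) i.succ j.succ) ∧
          Function.Surjective f ∧
          ((f.ker : Set S) =
            {M : S | ∃ d : ℤ, ((M : GL (Fin 4) ℚ) : Matrix (Fin 4) (Fin 4) ℚ) =
              !![1, 0, 0, (d : ℚ) / (2 * (k : ℚ));
                 0, 1, 0, 0;
                 0, 0, 1, 0;
                 0, 0, 0, 1]}) ∧
          Nonempty (f.ker ≃* Multiplicative ℤ) ∧
          f.ker ≤ Subgroup.center S := by
  refine ⟨Sgrp k hk, rfl, Tgrp k hk, rfl, fhom k hk, ?_, fhom_surj k hk, ?_, ?_, ker_central k hk⟩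
  · intro M i j
    rw [fhom_apply k hk, pp_spec k hk M]
    exact mk3_entry k _ _ _ _ i j
  · ext M
    rw [SetLike.mem_coe, mem_ker_iff k hk M]
    simp only [Set.mem_setOf_eq, mk4_zero_d k]
  · exact ⟨(MulEquiv.ofBijective (gker k hk) (gker_bij k hk)).symm⟩
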